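/- Let complex unit vectors u, v in a Hilbert space and real numbers p = ‖Pu‖², q = ‖Pv‖² for an orthogonal projection P, with p ≥ 1/2 and ‖u - v‖ ≤ ε/6 for some 0 < ε ≤ 1. Then q ≥ 1/2 - ε/3, and if q > 0 the normalized projected states satisfy ‖Pu/‖Pu‖ - Pv/‖Pv‖‖ ≤ (1+2√2)/(3√2) · ε < ε. -/

import Mathlib

set_option maxHeartbeats 1000000

/-- Let `P` be an orthogonal projection on a complex Hilbert space, `u, v` unit
vectors with `‖Pu‖² ≥ 1/2` and `‖u - v‖ ≤ ε/6` for some `0 < ε ≤ 1`. Then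
`‖Pv‖² ≥ 1/2 - ε/3`, and if `‖Pv‖² > 0`, the normalized projected states satisfy
`‖Pu/‖Pu‖ - Pv/‖Pv‖‖ ≤ (1+2√2)/(3√2)·ε < ε`. -/
theorem projected_state_stability {E : Type*} [NormedAddCommGroup E] [InnerProductSpace ℂ E]
    [CompleteSpace E] (P : E →L[ℂ] E)
    (hidem : ∀ x, P (P x) = P x)
    (hsa : ∀ x y : E, (inner ℂ (P x) y : ℂ) = inner ℂ x (P y))
    (u v : E) (hu : ‖u‖ = 1) (hv : ‖v‖ = 1)
    (ε : ℝ) (hε0 : 0 < ε) (hε1 : ε ≤ 1)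
    (hp : (1 : ℝ) / 2 ≤ ‖P u‖ ^ 2) (hd : ‖u - v‖ ≤ ε / 6) :
    (1 : ℝ) / 2 - ε / 3 ≤ ‖P v‖ ^ 2 ∧
      (0 < ‖P v‖ ^ 2 →
        ‖(‖P u‖ : ℝ)⁻¹ • P u - (‖P v‖ : ℝ)⁻¹ • P v‖ ≤ (1 + 2 * Real.sqrt 2) / (3 * Real.sqrt 2) * ε ∧
          (1 + 2 * Real.sqrt 2) / (3 * Real.sqrt 2) * ε < ε) := by
  have hcontr : ∀ x : E, ‖P x‖ ≤ ‖x‖ := by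
    intro x
    have h1 : (inner ℂ (P x) (P x) : ℂ) = inner ℂ x (P x) := by
      rw [hsa x (P x), hidem]
    have h2 : (‖P x‖ : ℝ) ^ 2 = Complex.re (inner ℂ x (P x) : ℂ) := by
      rw [← h1]
      exact (inner_self_eq_norm_sq (𝕜 := ℂ) (P x)).symm
    have h3 : Complex.re (inner ℂ x (P x) : ℂ) ≤ ‖x‖ * ‖P x‖ := by
      calc Complex.re (inner ℂ x (P x) : ℂ) ≤ ‖(inner ℂ x (P x) : ℂ)‖ := Complex.re_le_norm _
        _ ≤ ‖x‖ * ‖P x‖ := norm_inner_le_norm x (P x)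
    nlinarith [norm_nonneg (P x), norm_nonneg x]
  set a := ‖P u‖ with ha_def
  set b := ‖P v‖ with hb_def
  have ha0 : (0:ℝ) ≤ a := norm_nonneg _
  have hb0 : (0:ℝ) ≤ b := norm_nonneg _
  have ha1 : a ≤ 1 := by rw [ha_def, ← hu]; exact hcontr u
  have hb1 : b ≤ 1 := by rw [hb_def, ← hv]; exact hcontr v
  have hPuv : ‖P u - P v‖ ≤ ε / 6 := by
    calc ‖P u - P v‖ = ‖P (u - v)‖ := by rw [map_sub]
      _ ≤ ‖u - v‖ := hcontr _
      _ ≤ ε / 6 := hd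
  have habs : |b - a| ≤ ‖P u - P v‖ := by
    calc |b - a| ≤ ‖P v - P u‖ := abs_norm_sub_norm_le _ _
      _ = ‖P u - P v‖ := norm_sub_rev _ _
  have habs' : |b - a| ≤ ε / 6 := habs.trans hPuv
  have hab1 : b - a ≤ ε / 6 := (abs_le.1 habs').2.trans_eq' rfl
  have hab2 : a - b ≤ ε / 6 := by have := (abs_le.1 habs').1; linarith
  have hfirst : (1 : ℝ) / 2 - ε / 3 ≤ b ^ 2 := by
    nlinarith [mul_nonneg (sub_nonneg.2 hab2) (add_nonneg ha0 hb0),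
      mul_nonneg hε0.le (by linarith : (0:ℝ) ≤ 2 - (a + b))]
  refine ⟨hfirst, fun hq => ?_⟩
  have hb : (0:ℝ) < b := by nlinarith
  have ha : (0:ℝ) < a := by nlinarith
  set s := Real.sqrt 2 with hs_def
  have hs0 : (0:ℝ) ≤ s := Real.sqrt_nonneg 2
  have hs2 : s ^ 2 = 2 := Real.sq_sqrt (by norm_num)
  have hs1 : 1 < s := by nlinarith
  have hsle2 : s ≤ 2 := by nlinarith
  have hsa1 : 1 ≤ s * a := by
    have h2a : (s * a) ^ 2 = 2 * a ^ 2 := by rw [mul_pow, hs2]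
    nlinarith [mul_nonneg hs0 ha0]
  -- decomposition
  have hrw : a⁻¹ • P u - b⁻¹ • P v = a⁻¹ • (P u - P v) + (a⁻¹ - b⁻¹) • P v := by
    rw [smul_sub, sub_smul]; abel
  set d := ‖P u - P v‖ with hd_def
  have hd0 : (0:ℝ) ≤ d := norm_nonneg _
  have e1 : a⁻¹ - b⁻¹ = (b - a) / (a * b) := by field_simp
  have e2 : |a⁻¹ - b⁻¹| = |b - a| / (a * b) := by
    rw [e1, abs_div, abs_of_pos (mul_pos ha hb)]
  have hnorm : ‖a⁻¹ • P u - b⁻¹ • P v‖ ≤ a⁻¹ * d + |b - a| / (a * b) * b := by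
    rw [hrw]
    calc ‖a⁻¹ • (P u - P v) + (a⁻¹ - b⁻¹) • P v‖
        ≤ ‖a⁻¹ • (P u - P v)‖ + ‖(a⁻¹ - b⁻¹) • P v‖ := norm_add_le _ _
      _ = |a⁻¹| * d + |a⁻¹ - b⁻¹| * b := by rw [norm_smul, norm_smul]; rfl
      _ = a⁻¹ * d + |b - a| / (a * b) * b := by
          rw [e2, abs_of_pos (inv_pos.2 ha)]
  have hstep : a⁻¹ * d + |b - a| / (a * b) * b ≤ ε / (3 * a) := by
    have h1 : |b - a| / (a * b) * b = |b - a| / a := by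
      field_simp
    rw [h1]
    have h2 : a⁻¹ * d ≤ (ε/6) / a := by
      rw [inv_mul_eq_div]
      gcongr
    have h3 : |b - a| / a ≤ (ε/6) / a := by gcongr
    have h4 : (ε/6)/a + (ε/6)/a = ε/(3*a) := by field_simp; ring
    linarith
  have hfin : ε / (3 * a) ≤ (1 + 2 * s) / (3 * s) * ε := by
    rw [div_mul_eq_mul_div, div_le_div_iff₀ (by positivity) (by positivity)]
    nlinarith [mul_nonneg hε0.le (by nlinarith : (0:ℝ) ≤ (1 + 2*s) * a - s)]
  refine ⟨(hnorm.trans hstep).trans hfin, ?_⟩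
  rw [div_mul_eq_mul_div, div_lt_iff₀ (by positivity)]
  nlinarith [mul_pos hε0 (by linarith : (0:ℝ) < s - 1)]
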